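/- For the figure-eight knot $A$-polynomial $A(l,m) = l m^8 - l m^6 - (l^2+2l+1)m^4 - l m^2 + l$, we have $A(-1,-1)=0$, and there exist exactly two holomorphic branches $l(m)$ with $l(-1)=-1$ solving $A(l(m),m)=0$ near $m=-1$; their first-order Taylor coefficients at $m=-1$ are $2\sqrt{-3}$ and $-2\sqrt{-3}$ respectively. -/

import Mathlib

open Filter

/-- The `A`-polynomial of the figure-eight knot complement. -/
noncomputable def fig8A (l m : ℂ) : ℂ :=
  l * m ^ 8 - l * m ^ 6 - (l ^ 2 + 2 * l + 1) * m ^ 4 - l * m ^ 2 + l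

noncomputable def figP (m : ℂ) : ℂ := m^8 - m^6 - 2*m^4 - m^2 + 1
noncomputable def figQ (m : ℂ) : ℂ := (m^4 + m^2 + 1) * (m^8 - m^6 - 4*m^4 - m^2 + 1)
noncomputable def figG (m : ℂ) : ℂ :=
  -Complex.I * Complex.exp ((1/2 : ℂ) * Complex.log (-(figQ m)))
noncomputable def figL1 (m : ℂ) : ℂ := (figP m + (m^2 - 1) * figG m) / (2 * m^4)
noncomputable def figL2 (m : ℂ) : ℂ := (figP m - (m^2 - 1) * figG m) / (2 * m^4)

lemma figQ_neg_one : figQ (-1) = -12 := by norm_num [figQ]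

lemma exp_half_log_twelve :
    Complex.exp ((1/2 : ℂ) * Complex.log 12) = (2 * Real.sqrt 3 : ℝ) := by
  have h12 : (12 : ℂ) = ((12 : ℝ) : ℂ) := by norm_num
  rw [h12, ← Complex.ofReal_log (by norm_num : (0:ℝ) ≤ 12)]
  have : (1/2 : ℂ) * ((Real.log 12 : ℝ) : ℂ) = (((1/2) * Real.log 12 : ℝ) : ℂ) := by
    push_cast; ring
  rw [this, ← Complex.ofReal_exp]
  congr 1
  have : Real.exp ((1/2) * Real.log 12) = (12 : ℝ) ^ (1/2 : ℝ) := by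
    rw [Real.rpow_def_of_pos (by norm_num), mul_comm]
  rw [this, ← Real.sqrt_eq_rpow,
    show (12:ℝ) = 4 * 3 by norm_num, Real.sqrt_mul (by norm_num),
    show Real.sqrt 4 = 2 by
      rw [show (4:ℝ) = 2^2 by norm_num, Real.sqrt_sq (by norm_num)]]

lemma figG_neg_one : figG (-1) = -Complex.I * (2 * Real.sqrt 3 : ℝ) := by
  rw [figG, figQ_neg_one]
  norm_num [exp_half_log_twelve]


lemma figQ_analyticAt (z : ℂ) : AnalyticAt ℂ figQ z := by
  unfold figQ
  exact ((((analyticAt_id.pow 4).add (analyticAt_id.pow 2)).add analyticAt_const).mul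
    (((((analyticAt_id.pow 8).sub (analyticAt_id.pow 6)).sub
      (analyticAt_const.mul (analyticAt_id.pow 4))).sub (analyticAt_id.pow 2)).add
      analyticAt_const))

lemma figP_analyticAt (z : ℂ) : AnalyticAt ℂ figP z := by
  unfold figP
  exact ((((analyticAt_id.pow 8).sub (analyticAt_id.pow 6)).sub
      (analyticAt_const.mul (analyticAt_id.pow 4))).sub (analyticAt_id.pow 2)).add
      analyticAt_const

lemma figG_analyticAt : AnalyticAt ℂ figG (-1) := by
  unfold figG
  refine analyticAt_const.mul ((analyticAt_const.mul (AnalyticAt.clog ?_ ?_)).cexp)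
  · exact (figQ_analyticAt _).neg
  · rw [figQ_neg_one]
    norm_num [Complex.mem_slitPlane_iff]

lemma figL1_analyticAt : AnalyticAt ℂ figL1 (-1) := by
  unfold figL1
  refine AnalyticAt.div ?_ (analyticAt_const.mul (analyticAt_id.pow 4)) (by norm_num)
  exact (figP_analyticAt _).add
    (((analyticAt_id.pow 2).sub analyticAt_const).mul figG_analyticAt)

lemma figL2_analyticAt : AnalyticAt ℂ figL2 (-1) := by
  unfold figL2
  refine AnalyticAt.div ?_ (analyticAt_const.mul (analyticAt_id.pow 4)) (by norm_num)
  exact (figP_analyticAt _).sub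
    (((analyticAt_id.pow 2).sub analyticAt_const).mul figG_analyticAt)

lemma figG_sq {m : ℂ} (hq : figQ m ≠ 0) : figG m ^ 2 = figQ m := by
  unfold figG
  rw [mul_pow]
  have h2 : Complex.exp ((1/2 : ℂ) * Complex.log (-(figQ m))) ^ 2 = -(figQ m) := by
    have hc : ((2:ℕ):ℂ) * ((1/2 : ℂ) * Complex.log (-(figQ m))) = Complex.log (-(figQ m)) := by
      push_cast; ring
    rw [← Complex.exp_nat_mul, hc, Complex.exp_log (by simpa using hq)]
  rw [h2]
  have : (-Complex.I) ^ 2 = -1 := by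
    rw [neg_pow, Complex.I_sq]; norm_num
  rw [this]; ring

lemma figL1_neg_one : figL1 (-1) = -1 := by
  norm_num [figL1, figP]

lemma figL2_neg_one : figL2 (-1) = -1 := by
  norm_num [figL2, figP]

lemma fig8A_factor :
    ∀ᶠ m in nhds (-1 : ℂ), ∀ x : ℂ,
      fig8A x m = -m^4 * (x - figL1 m) * (x - figL2 m) := by
  have h1 : ∀ᶠ m in nhds (-1 : ℂ), m ≠ 0 := eventually_ne_nhds (by norm_num)
  have h2 : ∀ᶠ m in nhds (-1 : ℂ), figQ m ≠ 0 :=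
    ((figQ_analyticAt _).continuousAt).eventually_ne (by rw [figQ_neg_one]; norm_num)
  filter_upwards [h1, h2] with m hm hq x
  have hg2 : figG m ^ 2 = (m^4 + m^2 + 1) * (m^8 - m^6 - 4*m^4 - m^2 + 1) := by
    rw [figG_sq hq, figQ]
  have h4 : (2 : ℂ) * m^4 ≠ 0 := by simp [hm]
  simp only [figL1, figL2, fig8A, figP]
  field_simp
  linear_combination ((m^2 - 1)^3 * (m^2 + 1) - m^4 * (m^2 - 1)^2) * hg2

lemma hasDerivAt_figQ : HasDerivAt figQ 72 (-1) := by
  have hA : HasDerivAt (fun m : ℂ => m^4 + m^2 + 1) (-6) (-1) := by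
    have := ((hasDerivAt_pow 4 (-1 : ℂ)).add (hasDerivAt_pow 2 (-1 : ℂ))).add_const 1
    exact this.congr_deriv (by norm_num)
  have hB : HasDerivAt (fun m : ℂ => m^8 - m^6 - 4*m^4 - m^2 + 1) 16 (-1) := by
    have := ((((hasDerivAt_pow 8 (-1 : ℂ)).sub (hasDerivAt_pow 6 (-1 : ℂ))).sub
      ((hasDerivAt_pow 4 (-1 : ℂ)).const_mul 4)).sub (hasDerivAt_pow 2 (-1 : ℂ))).add_const 1
    exact this.congr_deriv (by norm_num)
  have := hA.mul hB
  unfold figQ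
  exact this.congr_deriv (by norm_num)

lemma hasDerivAt_figP : HasDerivAt figP 8 (-1) := by
  have := ((((hasDerivAt_pow 8 (-1 : ℂ)).sub (hasDerivAt_pow 6 (-1 : ℂ))).sub
    ((hasDerivAt_pow 4 (-1 : ℂ)).const_mul 2)).sub (hasDerivAt_pow 2 (-1 : ℂ))).add_const 1
  unfold figP
  exact this.congr_deriv (by norm_num)

lemma hasDerivAt_figG :
    HasDerivAt figG (6 * Real.sqrt 3 * Complex.I) (-1) := by
  have hlog : HasDerivAt (fun m => Complex.log (-(figQ m))) (-6) (-1) := by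
    have hneg : HasDerivAt (fun m => -(figQ m)) (-72) (-1) := hasDerivAt_figQ.neg
    have hmem : -(figQ (-1)) ∈ Complex.slitPlane := by
      rw [figQ_neg_one]; norm_num [Complex.mem_slitPlane_iff]
    have := hneg.clog hmem
    convert this using 1
    rw [figQ_neg_one]; norm_num
  have hexp := ((hlog.const_mul (1/2 : ℂ)).cexp)
  have := hexp.const_mul (-Complex.I)
  unfold figG
  refine this.congr_deriv ?_
  rw [figQ_neg_one]
  rw [show -(-12 : ℂ) = 12 by norm_num, exp_half_log_twelve]
  push_cast
  ring

lemma hasDerivAt_figL1 :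
    HasDerivAt figL1 (2 * (Complex.I * Real.sqrt 3)) (-1) := by
  have hN : HasDerivAt (fun m : ℂ => figP m + (m^2 - 1) * figG m)
      (8 + ((2 * (-1 : ℂ)^1) * figG (-1) + ((-1 : ℂ)^2 - 1) * (6 * Real.sqrt 3 * Complex.I)))
      (-1) := by
    refine hasDerivAt_figP.add ?_
    have h2 : HasDerivAt (fun m : ℂ => m^2 - 1) (2 * (-1 : ℂ)^1) (-1) := by
      simpa using (hasDerivAt_pow 2 (-1 : ℂ)).sub_const 1
    exact h2.mul hasDerivAt_figG
  have hD : HasDerivAt (fun m : ℂ => 2 * m^4) (2 * (4 * (-1 : ℂ)^3)) (-1) :=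
    (hasDerivAt_pow 4 (-1 : ℂ)).const_mul 2
  have hD0 : (2 : ℂ) * (-1 : ℂ)^4 ≠ 0 := by norm_num
  have := hN.div hD hD0
  unfold figL1
  refine this.congr_deriv ?_
  rw [figG_neg_one, figP]
  have hs : ((Real.sqrt 3 : ℝ) : ℂ) * ((Real.sqrt 3 : ℝ) : ℂ) = 3 := by
    rw [← Complex.ofReal_mul, Real.mul_self_sqrt (by norm_num)]
    norm_num
  field_simp
  push_cast
  ring

lemma hasDerivAt_figL2 :
    HasDerivAt figL2 (-(2 * (Complex.I * Real.sqrt 3))) (-1) := by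
  have hN : HasDerivAt (fun m : ℂ => figP m - (m^2 - 1) * figG m)
      (8 - ((2 * (-1 : ℂ)^1) * figG (-1) + ((-1 : ℂ)^2 - 1) * (6 * Real.sqrt 3 * Complex.I)))
      (-1) := by
    refine hasDerivAt_figP.sub ?_
    have h2 : HasDerivAt (fun m : ℂ => m^2 - 1) (2 * (-1 : ℂ)^1) (-1) := by
      simpa using (hasDerivAt_pow 2 (-1 : ℂ)).sub_const 1
    exact h2.mul hasDerivAt_figG
  have hD : HasDerivAt (fun m : ℂ => 2 * m^4) (2 * (4 * (-1 : ℂ)^3)) (-1) :=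
    (hasDerivAt_pow 4 (-1 : ℂ)).const_mul 2
  have hD0 : (2 : ℂ) * (-1 : ℂ)^4 ≠ 0 := by norm_num
  have := hN.div hD hD0
  unfold figL2
  refine this.congr_deriv ?_
  rw [figG_neg_one, figP]
  field_simp
  push_cast
  ring

/-- `A(-1,-1) = 0` for the figure-eight knot `A`-polynomial, and there are exactly
two holomorphic branches `l(m)` with `l(-1) = -1` and `A(l(m), m) = 0` near `m = -1`;
their first-order Taylor coefficients at `m = -1` are `2√-3` and `-2√-3`. -/
theorem fig8A_two_branches :
    fig8A (-1) (-1) = 0 ∧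
    ∃ l₁ l₂ : ℂ → ℂ,
      (AnalyticAt ℂ l₁ (-1) ∧ l₁ (-1) = -1 ∧
        (∀ᶠ m in nhds (-1 : ℂ), fig8A (l₁ m) m = 0) ∧
        deriv l₁ (-1) = 2 * (Complex.I * Real.sqrt 3)) ∧
      (AnalyticAt ℂ l₂ (-1) ∧ l₂ (-1) = -1 ∧
        (∀ᶠ m in nhds (-1 : ℂ), fig8A (l₂ m) m = 0) ∧
        deriv l₂ (-1) = -(2 * (Complex.I * Real.sqrt 3))) ∧
      (∀ l : ℂ → ℂ, AnalyticAt ℂ l (-1) → l (-1) = -1 →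
        (∀ᶠ m in nhds (-1 : ℂ), fig8A (l m) m = 0) →
        (∀ᶠ m in nhds (-1 : ℂ), l m = l₁ m) ∨ (∀ᶠ m in nhds (-1 : ℂ), l m = l₂ m)) := by
  refine ⟨by norm_num [fig8A], figL1, figL2,
    ⟨figL1_analyticAt, figL1_neg_one, ?_, hasDerivAt_figL1.deriv⟩,
    ⟨figL2_analyticAt, figL2_neg_one, ?_, hasDerivAt_figL2.deriv⟩, ?_⟩
  · filter_upwards [fig8A_factor] with m h
    rw [h (figL1 m)]; ring
  · filter_upwards [fig8A_factor] with m h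
    rw [h (figL2 m)]; ring
  · intro l hl hl1 hl0
    have hz : ∀ᶠ m in nhds (-1 : ℂ), (l m - figL1 m) * (l m - figL2 m) = 0 := by
      filter_upwards [fig8A_factor, hl0,
        eventually_ne_nhds (show (-1 : ℂ) ≠ 0 by norm_num)] with m hf h0 hm
      have h4 : (-(m^4) : ℂ) ≠ 0 := by simp [hm]
      apply mul_left_cancel₀ h4
      calc -(m^4) * ((l m - figL1 m) * (l m - figL2 m))
          = -m^4 * (l m - figL1 m) * (l m - figL2 m) := by ring
        _ = fig8A (l m) m := (hf (l m)).symm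
        _ = 0 := h0
        _ = -(m^4) * 0 := by ring
    have hA1 : AnalyticAt ℂ (fun m => l m - figL1 m) (-1) := hl.sub figL1_analyticAt
    rcases hA1.eventually_eq_zero_or_eventually_ne_zero with h | h
    · left
      filter_upwards [h] with m hm
      exact sub_eq_zero.mp hm
    · right
      have hz' : ∀ᶠ m in nhdsWithin (-1 : ℂ) {(-1 : ℂ)}ᶜ, l m = figL2 m := by
        filter_upwards [h, hz.filter_mono nhdsWithin_le_nhds] with m h1 h2
        rcases mul_eq_zero.mp h2 with hc | hc
        · exact absurd hc h1
        · exact sub_eq_zero.mp hc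
      rw [← nhdsNE_sup_pure (-1 : ℂ), eventually_sup]
      refine ⟨hz', ?_⟩
      rw [eventually_pure, hl1, figL2_neg_one]
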